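/- Let b: F_n^+ → ℝ_{>0} satisfy b_{g_0}=1 and the condition b_{β g_i}/b_{g_j β g_i} ≤ b_β/b_{g_j β} for all words β and all i,j ∈ {1,…,n}. Then for the inverse coefficients a_α defined by a_{g_0}=1 and b_γ + ∑_{βα=γ,|β|≥1} a_β b_α = 0 (|γ|≥1), one has a_α ≤ 0 for all |α| ≥ 1 and a_{g_i} < 0 for every i. -/

import Mathlib

noncomputable section

/-- Words over the alphabet `Fin n`: elements of the free monoid `F_n^+`. -/
abbrev Word (n : ℕ) := List (Fin n)

/-- if `b : F_n^+ → ℝ_{>0}` satisfies `b_{g₀}=1` and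
`b_{βg_i}/b_{g_jβg_i} ≤ b_β/b_{g_jβ}` for all words `β` and letters `i,j`, then the
coefficients `a` of the inverse power series (determined by `a_{g₀}=1` and
`b_γ + ∑_{βα=γ, |β|≥1} a_β b_α = 0` for `|γ|≥1`) satisfy `a_α ≤ 0` for `|α| ≥ 1` and
`a_{g_i} < 0` for every `i`. -/
theorem stmt8 {n : ℕ} (a b : Word n → ℝ) (hbpos : ∀ α, 0 < b α) (hb0 : b [] = 1)
    (hcond : ∀ (β : Word n) (i j : Fin n),
      b (β ++ [i]) / b (j :: (β ++ [i])) ≤ b β / b (j :: β))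
    (ha0 : a [] = 1)
    (hinv : ∀ γ : Word n, γ ≠ [] →
      b γ + ∑ k ∈ Finset.Icc 1 γ.length, a (γ.take k) * b (γ.drop k) = 0) :
    (∀ α : Word n, α ≠ [] → a α ≤ 0) ∧ (∀ i : Fin n, a [i] < 0) := by
  have hsingle : ∀ i : Fin n, a [i] = -b [i] := by
    intro i
    have h := hinv [i] (by simp)
    simp [hb0] at h
    linarith
  have hgen : ∀ (w β : Word n) (i : Fin n),
      b (β ++ [i]) * b (w ++ β) ≤ b β * b (w ++ β ++ [i]) := by
    intro w
    induction w with
    | nil => intro β i; simp [mul_comm]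
    | cons j w ih =>
      intro β i
      have h1 := ih β i
      have h2 := hcond (w ++ β) i j
      rw [div_le_div_iff₀ (hbpos _) (hbpos _)] at h2
      simp only [List.cons_append, List.append_assoc] at h1 h2 ⊢
      have h1' := h1
      have p2 := hbpos (w ++ β)
      have p4 := hbpos (w ++ (β ++ [i]))
      nlinarith [hbpos (β ++ [i]), hbpos β, hbpos (j :: (w ++ β)),
        hbpos (j :: (w ++ (β ++ [i]))), mul_pos p2 p4,
        mul_le_mul h1' h2 (mul_pos (hbpos _) (hbpos _)).le (mul_pos (hbpos _) (hbpos _)).le]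
  have key : ∀ N (γ : Word n), γ.length ≤ N → γ ≠ [] → a γ ≤ 0 := by
    intro N
    induction N with
    | zero =>
      intro γ h hne
      exact absurd (List.eq_nil_of_length_eq_zero (Nat.le_zero.mp h)) hne
    | succ N ih =>
      intro γ hlen hne
      obtain ⟨γ', i, rfl⟩ := (List.eq_nil_or_concat γ).resolve_left hne
      simp only [List.concat_eq_append] at hlen hne ⊢
      rcases eq_or_ne γ' [] with rfl | hγ'
      · simp only [List.nil_append]
        rw [hsingle i]
        linarith [hbpos [i]]
      · set d := γ'.length with hd
        have hdpos : 1 ≤ d := List.length_pos_iff.mpr hγ'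
        have hlen' : (γ' ++ [i]).length = d + 1 := by simp [hd]
        have hdN : d ≤ N := by rw [hlen'] at hlen; omega
        have h := hinv (γ' ++ [i]) (by simp)
        rw [hlen', Finset.sum_Icc_succ_top (by omega)] at h
        have htake : (γ' ++ [i]).take (d + 1) = γ' ++ [i] := by
          rw [← hlen']; exact List.take_length
        have hdrop : (γ' ++ [i]).drop (d + 1) = [] := by
          rw [← hlen']; exact List.drop_length
        rw [htake, hdrop, hb0, mul_one] at h
        have hsum : ∀ k ∈ Finset.Icc 1 d,
            a (γ'.take k) * b (γ'.drop k) * b (γ' ++ [i])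
              ≤ a ((γ' ++ [i]).take k) * b ((γ' ++ [i]).drop k) * b γ' := by
          intro k hk
          simp only [Finset.mem_Icc] at hk
          have htk : (γ' ++ [i]).take k = γ'.take k :=
            List.take_append_of_le_length (by omega)
          have hdk : (γ' ++ [i]).drop k = γ'.drop k ++ [i] :=
            List.drop_append_of_le_length (by omega)
          rw [htk, hdk]
          have hg := hgen (γ'.take k) (γ'.drop k) i
          rw [List.take_append_drop] at hg
          have hak : a (γ'.take k) ≤ 0 := by
            apply ih
            · exact (List.length_take_le k γ').trans (hk.2.trans hdN)
            · intro hnil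
              rw [List.take_eq_nil_iff] at hnil
              rcases hnil with h0 | h0
              · omega
              · exact hγ' h0
          nlinarith [mul_le_mul_of_nonpos_left hg hak]
        have hS := Finset.sum_le_sum hsum
        rw [← Finset.sum_mul, ← Finset.sum_mul] at hS
        have h' := hinv γ' hγ'
        rw [← hd] at h'
        have hsum' : ∑ k ∈ Finset.Icc 1 d, a (γ'.take k) * b (γ'.drop k) = -b γ' := by
          linarith
        rw [hsum'] at hS
        nlinarith [h, hS, hbpos γ', hbpos (γ' ++ [i])]
  refine ⟨fun α hα => key α.length α le_rfl hα, fun i => ?_⟩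
  rw [hsingle i]
  linarith [hbpos [i]]
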